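/- Let a ≥ 1 and b ≥ 3 be integers. The map S_{a,b} : B → B is not ergodic with respect to Lebesgue measure: there exists a measurable set E ⊆ B with S_{a,b}^{-1}(E) = E up to a Lebesgue-null set such that both E and B∖E have positive Lebesgue measure. -/

import Mathlib

open MeasureTheory Filter Topology

/-- `Λⁿ`: points of `ℝⁿ` with nonnegative, nondecreasing coordinates. -/
def Lambda (n : ℕ) : Set (Fin n → ℝ) := {x | (∀ i, 0 ≤ x i) ∧ Monotone x}

/-- The vector `(x₁,…,x_a, x_{a+1}-x_a,…,x_{a+b}-x_a)` (0-based indexing). -/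
noncomputable def subVec (a b : ℕ) (x : Fin (a + b) → ℝ) : Fin (a + b) → ℝ :=
  fun j => if (j : ℕ) < a then x j else x j - x ⟨a - 1, by have := j.isLt; omega⟩

/-- The map `T_{a,b}`: nondecreasing rearrangement of `subVec a b x`. -/
noncomputable def Tab (a b : ℕ) (x : Fin (a + b) → ℝ) : Fin (a + b) → ℝ :=
  subVec a b x ∘ Tuple.sort (subVec a b x)
/-- `B`: points of `ℝⁿ` with `0 ≤ x₁ ≤ … ≤ xₙ ≤ 1`. -/
def BSet (n : ℕ) : Set (Fin n → ℝ) :=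
  {x | (∀ i, 0 ≤ x i) ∧ Monotone x ∧ ∀ i, x i ≤ 1}

/-- The projected map `S_{a,b} : B → B`: with `y = T_{a,b}(x₁,…,x_{a+b-1},1)`,
`S_{a,b}(x) = (y₁/y_{a+b},…,y_{a+b-1}/y_{a+b})`. -/
noncomputable def Sab (a b : ℕ) (x : Fin (a + b - 1) → ℝ) : Fin (a + b - 1) → ℝ :=
  fun i =>
    Tab a b (fun j => if h : (j : ℕ) < a + b - 1 then x ⟨j, h⟩ else 1)
        ⟨i, by have := i.isLt; omega⟩ /
    Tab a b (fun j => if h : (j : ℕ) < a + b - 1 then x ⟨j, h⟩ else 1)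
        ⟨a + b - 1, by have := i.isLt; omega⟩

/-- Measurability via a countable measurable cover on which `f` agrees with measurable maps. -/
lemma measurable_of_countable_cover {α β : Type*} [MeasurableSpace α] [MeasurableSpace β]
    {ι : Type*} [Countable ι] (A : ι → Set α) (g : ι → α → β) {f : α → β}
    (hA : ∀ i, MeasurableSet (A i)) (hg : ∀ i, Measurable (g i))
    (hcov : ∀ x, ∃ i, x ∈ A i) (heq : ∀ i x, x ∈ A i → f x = g i x) : Measurable f := by
  intro s hs
  have hset : f ⁻¹' s = ⋃ i, A i ∩ g i ⁻¹' s := by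
    ext x
    constructor
    · intro hx
      obtain ⟨i, hi⟩ := hcov x
      exact Set.mem_iUnion.2 ⟨i, hi, by simpa [Set.mem_preimage, ← heq i x hi] using hx⟩
    · intro hx
      obtain ⟨i, hi, hgi⟩ := Set.mem_iUnion.1 hx
      simpa [Set.mem_preimage, heq i x hi] using hgi
  rw [hset]
  exact MeasurableSet.iUnion fun i => (hA i).inter (hg i hs)

/-- Each coordinate of the nondecreasing rearrangement of a tuple is measurable. -/
lemma measurable_sorted {N : ℕ} (i : Fin N) :
    Measurable (fun v : Fin N → ℝ => (v ∘ Tuple.sort v) i) := by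
  apply measurable_of_countable_cover
    (fun σ : Equiv.Perm (Fin N) => {v : Fin N → ℝ | Monotone (v ∘ σ)})
    (fun σ v => v (σ i))
  · intro σ
    have h : {v : Fin N → ℝ | Monotone (v ∘ σ)}
        = ⋂ (p : Fin N) (q : Fin N) (_ : p ≤ q), {v : Fin N → ℝ | v (σ p) ≤ v (σ q)} := by
      ext v
      simp only [Set.mem_setOf_eq, Set.mem_iInter, Monotone]
      exact ⟨fun h p q hpq => h hpq, fun h p q hpq => h p q hpq⟩
    rw [h]
    exact MeasurableSet.iInter fun p => MeasurableSet.iInter fun q =>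
      MeasurableSet.iInter fun _ =>
        measurableSet_le (measurable_pi_apply _) (measurable_pi_apply _)
  · intro σ
    exact measurable_pi_apply _
  · intro v
    exact ⟨Tuple.sort v, Tuple.monotone_sort v⟩
  · intro σ v hv
    exact (congrFun (Tuple.comp_sort_eq_comp_iff_monotone.mpr hv) i).symm

set_option linter.unusedSectionVars false

namespace NE

variable {a b : ℕ}

/-- the extension of `x` by a final `1`. -/
noncomputable def ext (a b : ℕ) (x : Fin (a + b - 1) → ℝ) : Fin (a + b) → ℝ :=
  fun j => if h : (j : ℕ) < a + b - 1 then x ⟨j, h⟩ else 1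

lemma Sab_eq (x : Fin (a + b - 1) → ℝ) (i : Fin (a + b - 1)) :
    Sab a b x i = Tab a b (ext a b x) ⟨i, by have := i.isLt; omega⟩ /
      Tab a b (ext a b x) ⟨a + b - 1, by have := i.isLt; omega⟩ := rfl

/-- `s = x_{a-1}` (junk value when b = 0). -/
noncomputable def sv (a b : ℕ) (x : Fin (a + b - 1) → ℝ) : ℝ :=
  if h : a - 1 < a + b - 1 then x ⟨a - 1, h⟩ else 0

section dyn

variable (ha : 1 ≤ a) (hb : 3 ≤ b) (x : Fin (a + b - 1) → ℝ)

include ha hb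

lemma sv_eq : sv a b x = x ⟨a - 1, by omega⟩ := by
  have h : a - 1 < a + b - 1 := by omega
  simp [sv, h]

lemma subVec_ext_lt {j : Fin (a + b)} (hj : (j : ℕ) < a) :
    subVec a b (ext a b x) j = x ⟨j, by omega⟩ := by
  have hj' : (j : ℕ) < a + b - 1 := by omega
  simp [subVec, ext, hj, hj']

lemma subVec_ext_mid {j : Fin (a + b)} (hj : a ≤ (j : ℕ)) (hj2 : (j : ℕ) < a + b - 1) :
    subVec a b (ext a b x) j = x ⟨j, hj2⟩ - sv a b x := by
  have hj' : ¬ (j : ℕ) < a := by omega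
  have ha' : a - 1 < a + b - 1 := by omega
  simp [subVec, ext, hj', hj2, ha', sv]

lemma subVec_ext_top {j : Fin (a + b)} (hj : (j : ℕ) = a + b - 1) :
    subVec a b (ext a b x) j = 1 - sv a b x := by
  have hj' : ¬ (j : ℕ) < a := by omega
  have hj2 : ¬ (j : ℕ) < a + b - 1 := by omega
  have ha' : a - 1 < a + b - 1 := by omega
  simp [subVec, ext, hj', hj2, ha', sv]

variable (hx : x ∈ BSet (a + b - 1))
include hx

lemma s_nonneg : 0 ≤ sv a b x := by rw [sv_eq ha hb]; exact hx.1 _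

lemma s_le_one : sv a b x ≤ 1 := by rw [sv_eq ha hb]; exact hx.2.2 _

lemma subVec_ext_nonneg (j : Fin (a + b)) : 0 ≤ subVec a b (ext a b x) j := by
  rcases lt_or_ge (j : ℕ) a with hj | hj
  · rw [subVec_ext_lt ha hb x hj]; exact hx.1 _
  · rcases lt_or_ge (j : ℕ) (a + b - 1) with hj2 | hj2
    · rw [subVec_ext_mid ha hb x hj hj2, sv_eq ha hb]
      have : x ⟨a - 1, by omega⟩ ≤ x ⟨j, hj2⟩ := by
        apply hx.2.1
        simp only [Fin.mk_le_mk]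
        omega
      linarith
    · have hj3 : (j : ℕ) = a + b - 1 := by have := j.isLt; omega
      rw [subVec_ext_top ha hb x hj3]
      have := s_le_one ha hb x hx
      linarith

lemma subVec_ext_le (j : Fin (a + b)) :
    subVec a b (ext a b x) j ≤ max (sv a b x) (1 - sv a b x) := by
  rcases lt_or_ge (j : ℕ) a with hj | hj
  · rw [subVec_ext_lt ha hb x hj]
    refine le_max_of_le_left ?_
    rw [sv_eq ha hb]
    apply hx.2.1
    simp only [Fin.mk_le_mk]
    omega
  · rcases lt_or_ge (j : ℕ) (a + b - 1) with hj2 | hj2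
    · rw [subVec_ext_mid ha hb x hj hj2]
      refine le_max_of_le_right ?_
      have : x ⟨j, hj2⟩ ≤ 1 := hx.2.2 _
      linarith
    · have hj3 : (j : ℕ) = a + b - 1 := by have := j.isLt; omega
      rw [subVec_ext_top ha hb x hj3]
      exact le_max_right _ _

omit hx in
lemma Tab_monotone : Monotone (Tab a b (ext a b x)) := Tuple.monotone_sort _

omit hx in
/-- every value of subVec is ≤ the top sorted value -/
lemma subVec_le_Tab_top (j : Fin (a + b)) :
    subVec a b (ext a b x) j ≤ Tab a b (ext a b x) ⟨a + b - 1, by omega⟩ := by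
  set v := subVec a b (ext a b x)
  set σ := Tuple.sort v
  have h1 : v j = Tab a b (ext a b x) (σ.symm j) := by
    show v j = (v ∘ σ) (σ.symm j)
    simp
  rw [h1]
  apply Tab_monotone ha hb x
  simp only [Fin.le_def]
  have := (σ.symm j).isLt
  omega

lemma Tab_top_eq : Tab a b (ext a b x) ⟨a + b - 1, by omega⟩
    = max (sv a b x) (1 - sv a b x) := by
  apply le_antisymm
  · exact subVec_ext_le ha hb x hx _
  · apply max_le
    · have h := subVec_le_Tab_top ha hb x ⟨a - 1, by omega⟩
      rw [subVec_ext_lt ha hb x (by simp; omega)] at h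
      rwa [sv_eq ha hb]
    · have h := subVec_le_Tab_top ha hb x ⟨a + b - 1, by omega⟩
      rwa [subVec_ext_top ha hb x (by simp)] at h

omit hx in
lemma max_ge_half : (1:ℝ)/2 ≤ max (sv a b x) (1 - sv a b x) := by
  rcases le_total (sv a b x) (1 - sv a b x) with h | h
  · rw [max_eq_right h]; linarith
  · rw [max_eq_left h]; linarith

lemma Tab_top_pos : 0 < Tab a b (ext a b x) ⟨a + b - 1, by omega⟩ := by
  rw [Tab_top_eq ha hb x hx]
  have := max_ge_half ha hb x
  linarith

lemma Sab_mem_BSet : Sab a b x ∈ BSet (a + b - 1) := by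
  have hpos := Tab_top_pos ha hb x hx
  have hval : ∀ i : Fin (a + b), 0 ≤ Tab a b (ext a b x) i := by
    intro i
    exact subVec_ext_nonneg ha hb x hx _
  refine ⟨fun i => ?_, fun i j hij => ?_, fun i => ?_⟩
  · rw [Sab_eq]
    exact div_nonneg (hval _) hpos.le
  · rw [Sab_eq, Sab_eq]
    refine (div_le_div_iff_of_pos_right hpos).mpr ?_
    apply Tab_monotone ha hb x
    simp only [Fin.mk_le_mk]
    exact hij
  · rw [Sab_eq]
    rw [div_le_one hpos]
    apply Tab_monotone ha hb x
    simp only [Fin.le_def]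
    have := i.isLt
    omega

end dyn
end NE
section sums

namespace NE
variable {a b : ℕ}

section dyn2
variable (ha : 1 ≤ a) (hb : 3 ≤ b) (x : Fin (a + b - 1) → ℝ)
include ha hb

lemma ext_eq_lt {j : Fin (a + b)} (hj : (j : ℕ) < a + b - 1) : ext a b x j = x ⟨j, hj⟩ :=
  dif_pos hj

lemma ext_eq_top {j : Fin (a + b)} (hj : ¬ (j : ℕ) < a + b - 1) : ext a b x j = 1 :=
  dif_neg hj

lemma range_succ_eq : Finset.range (a + b) = Finset.range ((a + b - 1) + 1) := by
  congr 1
  omega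

lemma sum_ext : ∑ j : Fin (a + b), ext a b x j = (∑ i, x i) + 1 := by
  classical
  have h1 : ∑ j : Fin (a + b), ext a b x j
      = ∑ k ∈ Finset.range (a + b), if h : k < a + b - 1 then x ⟨k, h⟩ else 1 := by
    rw [← Fin.sum_univ_eq_sum_range (fun k => if h : k < a + b - 1 then x ⟨k, h⟩ else 1) (a + b)]
    all_goals exact Finset.sum_congr rfl fun j _ => rfl
  rw [h1, range_succ_eq ha hb, Finset.sum_range_succ,
    dif_neg (by omega : ¬ a + b - 1 < a + b - 1)]
  have h4 : ∑ k ∈ Finset.range (a + b - 1), (if h : k < a + b - 1 then x ⟨k, h⟩ else 1)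
      = ∑ i, x i := by
    rw [← Fin.sum_univ_eq_sum_range (fun k => if h : k < a + b - 1 then x ⟨k, h⟩ else 1)
      (a + b - 1)]
    apply Finset.sum_congr rfl
    intro i _
    show (if h : (i : ℕ) < a + b - 1 then x ⟨i, h⟩ else 1) = x i
    rw [dif_pos i.isLt]
  rw [h4]

lemma sum_indicator : ∑ j : Fin (a + b), (if a ≤ (j : ℕ) then sv a b x else 0)
    = b * sv a b x := by
  classical
  have h1 : ∑ j : Fin (a + b), (if a ≤ (j : ℕ) then sv a b x else 0)
      = ∑ k ∈ Finset.range (a + b), if a ≤ k then sv a b x else 0 := by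
    rw [← Fin.sum_univ_eq_sum_range (fun k => if a ≤ k then sv a b x else 0) (a + b)]
    all_goals exact Finset.sum_congr rfl fun j _ => rfl
  rw [h1, Finset.range_eq_Ico,
    ← Finset.sum_Ico_consecutive _ (Nat.zero_le a) (by omega : a ≤ a + b)]
  have h2 : ∑ k ∈ Finset.Ico 0 a, (if a ≤ k then sv a b x else 0) = 0 := by
    apply Finset.sum_eq_zero
    intro k hk
    rw [Finset.mem_Ico] at hk
    exact if_neg (by omega)
  have h3 : ∑ k ∈ Finset.Ico a (a + b), (if a ≤ k then sv a b x else 0)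
      = b * sv a b x := by
    have heq : ∀ k ∈ Finset.Ico a (a + b),
        (if a ≤ k then sv a b x else 0) = sv a b x := by
      intro k hk
      rw [Finset.mem_Ico] at hk
      exact if_pos hk.1
    rw [Finset.sum_congr rfl heq, Finset.sum_const, Nat.card_Ico]
    have hab : a + b - a = b := by omega
    rw [hab, nsmul_eq_mul]
  rw [h2, h3, zero_add]

lemma sum_subVec : ∑ j : Fin (a + b), subVec a b (ext a b x) j
    = (∑ i, x i) + 1 - b * sv a b x := by
  have h1 : ∀ j : Fin (a + b), subVec a b (ext a b x) j
      = ext a b x j - (if a ≤ (j : ℕ) then sv a b x else 0) := by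
    intro j
    rcases lt_or_ge (j : ℕ) a with hj | hj
    · rw [subVec_ext_lt ha hb x hj, if_neg (by omega), sub_zero,
        ext_eq_lt ha hb x (by omega : (j:ℕ) < a + b - 1)]
    · rw [if_pos hj]
      rcases lt_or_ge (j : ℕ) (a + b - 1) with hj2 | hj2
      · rw [subVec_ext_mid ha hb x hj hj2, ext_eq_lt ha hb x hj2]
      · have hj3 : (j : ℕ) = a + b - 1 := by have := j.isLt; omega
        rw [subVec_ext_top ha hb x hj3, ext_eq_top ha hb x (by omega)]
  rw [Finset.sum_congr rfl (fun j _ => h1 j), Finset.sum_sub_distrib,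
    sum_ext ha hb x, sum_indicator ha hb x]

lemma sum_Tab : ∑ j : Fin (a + b), Tab a b (ext a b x) j
    = (∑ i, x i) + 1 - b * sv a b x := by
  rw [← sum_subVec ha hb x]
  exact Equiv.sum_comp (Tuple.sort (subVec a b (ext a b x))) (subVec a b (ext a b x))

variable (hx : x ∈ BSet (a + b - 1))
include hx

lemma sum_Sab : ∑ i, Sab a b x i
    = ((∑ i, x i) + 1 - b * sv a b x) / (max (sv a b x) (1 - sv a b x)) - 1 := by
  classical
  have hM2 := max_ge_half ha hb x
  have hMne : max (sv a b x) (1 - sv a b x) ≠ 0 := by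
    intro h0
    rw [h0] at hM2
    linarith
  have htop := Tab_top_eq ha hb x hx
  have h0 : ∀ i : Fin (a + b - 1), Sab a b x i
      = Tab a b (ext a b x) ⟨(i : ℕ), by have := i.isLt; omega⟩
        / max (sv a b x) (1 - sv a b x) := by
    intro i
    rw [Sab_eq, htop]
  have h1 : ∑ i : Fin (a + b - 1),
      Tab a b (ext a b x) ⟨(i : ℕ), by have := i.isLt; omega⟩
      = ∑ k ∈ Finset.range (a + b - 1),
        if h : k < a + b then Tab a b (ext a b x) ⟨k, h⟩ else 0 := by
    rw [← Fin.sum_univ_eq_sum_range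
      (fun k => if h : k < a + b then Tab a b (ext a b x) ⟨k, h⟩ else 0) (a + b - 1)]
    apply Finset.sum_congr rfl
    intro i _
    show _ = if h : (i : ℕ) < a + b then Tab a b (ext a b x) ⟨i, h⟩ else 0
    rw [dif_pos (by have := i.isLt; omega : (i : ℕ) < a + b)]
  have h2 : ∑ j : Fin (a + b), Tab a b (ext a b x) j
      = ∑ k ∈ Finset.range (a + b),
        if h : k < a + b then Tab a b (ext a b x) ⟨k, h⟩ else 0 := by
    rw [← Fin.sum_univ_eq_sum_range
      (fun k => if h : k < a + b then Tab a b (ext a b x) ⟨k, h⟩ else 0) (a + b)]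
    apply Finset.sum_congr rfl
    intro j _
    show _ = if h : (j : ℕ) < a + b then Tab a b (ext a b x) ⟨j, h⟩ else 0
    rw [dif_pos j.isLt]
  have h5 : ∑ k ∈ Finset.range (a + b - 1),
      (if h : k < a + b then Tab a b (ext a b x) ⟨k, h⟩ else 0)
      = (∑ i, x i) + 1 - b * sv a b x - max (sv a b x) (1 - sv a b x) := by
    have hst := sum_Tab ha hb x
    rw [h2, range_succ_eq ha hb, Finset.sum_range_succ,
      dif_pos (by omega : a + b - 1 < a + b), htop] at hst
    linarith
  calc ∑ i, Sab a b x i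
      = ∑ i : Fin (a + b - 1),
        Tab a b (ext a b x) ⟨(i : ℕ), by have := i.isLt; omega⟩
          / max (sv a b x) (1 - sv a b x) := Finset.sum_congr rfl fun i _ => h0 i
    _ = (∑ i : Fin (a + b - 1),
        Tab a b (ext a b x) ⟨(i : ℕ), by have := i.isLt; omega⟩)
          / max (sv a b x) (1 - sv a b x) := by rw [Finset.sum_div]
    _ = ((∑ i, x i) + 1 - b * sv a b x - max (sv a b x) (1 - sv a b x))
          / max (sv a b x) (1 - sv a b x) := by rw [h1, h5]
    _ = ((∑ i, x i) + 1 - b * sv a b x) / (max (sv a b x) (1 - sv a b x)) - 1 := by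
        rw [sub_div, div_self hMne]

end dyn2
end NE
end sums
section dynamics2

namespace NE
variable {a b : ℕ}

/-- the last coordinate (junk when degenerate). -/
noncomputable def mlast (a b : ℕ) (x : Fin (a + b - 1) → ℝ) : ℝ :=
  if h : a + b - 2 < a + b - 1 then x ⟨a + b - 2, h⟩ else 0

/-- the Lyapunov function for the invariant region. -/
noncomputable def Ufun (a b : ℕ) (x : Fin (a + b - 1) → ℝ) : ℝ :=
  (∑ i, x i) + 1 - 2 * mlast a b x

section dyn3
variable (ha : 1 ≤ a) (hb : 3 ≤ b) (x : Fin (a + b - 1) → ℝ)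
include ha hb

lemma mlast_eq : mlast a b x = x ⟨a + b - 2, by omega⟩ := dif_pos (by omega)

variable (hx : x ∈ BSet (a + b - 1))
include hx

lemma sum_nonneg' : 0 ≤ ∑ i, x i := Finset.sum_nonneg fun i _ => hx.1 i

/-- Σ is nonincreasing where Σ ≤ b - 1. -/
lemma sum_Sab_le (hq : ∑ i, x i ≤ (b : ℝ) - 1) : ∑ i, Sab a b x i ≤ ∑ i, x i := by
  have hs0 := s_nonneg ha hb x hx
  have hs1 := s_le_one ha hb x hx
  have hM2 := max_ge_half ha hb x
  have hMpos : (0:ℝ) < max (sv a b x) (1 - sv a b x) := by linarith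
  have hM1 : max (sv a b x) (1 - sv a b x) ≤ 1 := by apply max_le <;> linarith
  have hMge : 1 - sv a b x ≤ max (sv a b x) (1 - sv a b x) := le_max_right _ _
  have hSS0 := sum_nonneg' ha hb x hx
  rw [sum_Sab ha hb x hx]
  set s := sv a b x
  set M := max s (1 - s)
  set SS := ∑ i, x i
  have key : SS + 1 - b * s ≤ M * (SS + 1) := by nlinarith
  have h2 : (SS + 1 - b * s) / M ≤ SS + 1 := by
    rw [div_le_iff₀ hMpos]
    nlinarith
  linarith

lemma pair_le_sum {i j : Fin (a + b - 1)} (hne : i ≠ j) : x i + x j ≤ ∑ k, x k := by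
  classical
  have h1 : ∑ k ∈ ({i, j} : Finset (Fin (a + b - 1))), x k = x i + x j :=
    Finset.sum_pair hne
  rw [← h1]
  exact Finset.sum_le_sum_of_subset_of_nonneg (Finset.subset_univ _)
    (fun k _ _ => hx.1 k)

lemma single_le_sum' (i : Fin (a + b - 1)) : x i ≤ ∑ k, x k :=
  Finset.single_le_sum (fun k _ => hx.1 k) (Finset.mem_univ i)

variable (hU : Ufun a b x ≤ 1/4)
include hU

lemma m_ge : 3/4 ≤ mlast a b x := by
  have h1 := single_le_sum' ha hb x hx ⟨a + b - 2, by omega⟩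
  rw [← mlast_eq ha hb x] at h1
  have h2 : (∑ i, x i) + 1 - 2 * mlast a b x ≤ 1/4 := hU
  linarith

lemma Wsum : 3/4 ≤ ∑ i, x i := by
  have h1 := m_ge ha hb x hx hU
  have h2 := single_le_sum' ha hb x hx ⟨a + b - 2, by omega⟩
  rw [← mlast_eq ha hb x] at h2
  linarith

lemma m_le_one : mlast a b x ≤ 1 := by
  rw [mlast_eq ha hb x]
  exact hx.2.2 _

lemma s_le_quarter : sv a b x ≤ 1/4 := by
  have hpair := pair_le_sum ha hb x hx
    (show (⟨a - 1, by omega⟩ : Fin (a + b - 1)) ≠ ⟨a + b - 2, by omega⟩ by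
      simp only [ne_eq, Fin.mk.injEq]
      omega)
  rw [← sv_eq ha hb x, ← mlast_eq ha hb x] at hpair
  have h2 : (∑ i, x i) + 1 - 2 * mlast a b x ≤ 1/4 := hU
  have h3 := m_le_one ha hb x hx hU
  linarith

lemma small_le_quarter {i : Fin (a + b - 1)} (hi : (i : ℕ) ≠ a + b - 2) :
    x i ≤ 1/4 := by
  have hpair := pair_le_sum ha hb x hx
    (show i ≠ ⟨a + b - 2, by omega⟩ by
      intro h
      apply hi
      rw [h])
  rw [← mlast_eq ha hb x] at hpair
  have h2 : (∑ i, x i) + 1 - 2 * mlast a b x ≤ 1/4 := hU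
  have h3 := m_le_one ha hb x hx hU
  linarith

/-- any subVec value except at the top index is at most `m - s`. -/
lemma subVec_le_ms {j : Fin (a + b)} (hj : (j : ℕ) ≠ a + b - 1) :
    subVec a b (ext a b x) j ≤ mlast a b x - sv a b x := by
  have hs0 := s_nonneg ha hb x hx
  have hs4 := s_le_quarter ha hb x hx hU
  have hm := m_ge ha hb x hx hU
  rcases lt_or_ge (j : ℕ) a with hja | hja
  · rw [subVec_ext_lt ha hb x hja]
    have : x ⟨j, by omega⟩ ≤ sv a b x := by
      rw [sv_eq ha hb x]
      apply hx.2.1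
      simp only [Fin.mk_le_mk]
      omega
    linarith
  · have hj2 : (j : ℕ) < a + b - 1 := by have := j.isLt; omega
    rw [subVec_ext_mid ha hb x hja hj2]
    rcases eq_or_ne (j : ℕ) (a + b - 2) with hje | hje
    · have : x ⟨(j : ℕ), hj2⟩ = mlast a b x := by
        rw [mlast_eq ha hb x]
        congr 1
        exact Fin.ext hje
      linarith
    · have := small_le_quarter ha hb x hx hU (i := ⟨(j : ℕ), hj2⟩) (by simpa using hje)
      linarith

lemma subVec_sec_eq :
    subVec a b (ext a b x) ⟨a + b - 2, by omega⟩ = mlast a b x - sv a b x := by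
  rw [subVec_ext_mid ha hb x (by simp; omega) (by simp; omega), mlast_eq ha hb x]

lemma Tab_sec_eq : Tab a b (ext a b x) ⟨a + b - 2, by omega⟩
    = mlast a b x - sv a b x := by
  have hs4 := s_le_quarter ha hb x hx hU
  have hm := m_ge ha hb x hx hU
  have hm1 := m_le_one ha hb x hx hU
  set v := subVec a b (ext a b x) with hv
  set σ := Tuple.sort v with hσ
  have hTab : ∀ i : Fin (a + b), Tab a b (ext a b x) i = v (σ i) := fun i => rfl
  have hmono := Tab_monotone ha hb x
  apply le_antisymm
  · -- upper bound
    rcases eq_or_ne ((σ ⟨a + b - 2, by omega⟩ : Fin (a + b)) : ℕ) (a + b - 1) with hc | hc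
    · -- the value at position sec is the top value; then position top holds another value
      have hne : σ ⟨a + b - 2, by omega⟩ ≠ σ ⟨a + b - 1, by omega⟩ := by
        intro h
        have := σ.injective h
        simp only [Fin.mk.injEq] at this
        omega
      have hc2 : ((σ ⟨a + b - 1, by omega⟩ : Fin (a + b)) : ℕ) ≠ a + b - 1 := by
        intro h
        apply hne
        apply Fin.ext
        omega
      have h1 : Tab a b (ext a b x) ⟨a + b - 2, by omega⟩
          ≤ Tab a b (ext a b x) ⟨a + b - 1, by omega⟩ := by
        apply hmono
        simp only [Fin.mk_le_mk]
        omega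
      have h2 := subVec_le_ms ha hb x hx hU hc2
      rw [hTab] at h1 ⊢
      calc v (σ ⟨a + b - 2, by omega⟩) ≤ v (σ ⟨a + b - 1, by omega⟩) := h1
        _ ≤ mlast a b x - sv a b x := h2
    · have := subVec_le_ms ha hb x hx hU hc
      rw [hTab]
      exact this
  · -- lower bound
    set i1 := σ.symm ⟨a + b - 2, by omega⟩ with hi1
    set i2 := σ.symm ⟨a + b - 1, by omega⟩ with hi2
    have hne : i1 ≠ i2 := by
      intro h
      have : (⟨a + b - 2, by omega⟩ : Fin (a + b)) = ⟨a + b - 1, by omega⟩ := by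
        have := congrArg σ h
        simpa [hi1, hi2] using this
      simp only [Fin.mk.injEq] at this
      omega
    rcases le_or_gt ((i1 : Fin (a + b)) : ℕ) (a + b - 2) with hc | hc
    · have h1 : Tab a b (ext a b x) i1 ≤ Tab a b (ext a b x) ⟨a + b - 2, by omega⟩ := by
        apply hmono
        simp only [Fin.le_def]
        omega
      have h2 : Tab a b (ext a b x) i1 = mlast a b x - sv a b x := by
        rw [hTab, hi1, Equiv.apply_symm_apply]
        exact subVec_sec_eq ha hb x hx hU
      linarith
    · have hi1top : ((i1 : Fin (a + b)) : ℕ) = a + b - 1 := by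
        have := i1.isLt
        omega
      have hc2 : ((i2 : Fin (a + b)) : ℕ) ≤ a + b - 2 := by
        have := i2.isLt
        rcases Nat.lt_or_ge ((i2 : Fin (a + b)) : ℕ) (a + b - 1) with h | h
        · omega
        · exfalso
          apply hne
          apply Fin.ext
          omega
      have h1 : Tab a b (ext a b x) i2 ≤ Tab a b (ext a b x) ⟨a + b - 2, by omega⟩ := by
        apply hmono
        simp only [Fin.le_def]
        omega
      have h2 : Tab a b (ext a b x) i2 = 1 - sv a b x := by
        rw [hTab, hi2, Equiv.apply_symm_apply]
        exact subVec_ext_top ha hb x (by simp)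
      linarith

lemma Tab_top_W : Tab a b (ext a b x) ⟨a + b - 1, by omega⟩ = 1 - sv a b x := by
  rw [Tab_top_eq ha hb x hx, max_eq_right]
  have := s_le_quarter ha hb x hx hU
  linarith

lemma mlast_Sab : mlast a b (Sab a b x)
    = (mlast a b x - sv a b x) / (1 - sv a b x) := by
  rw [mlast_eq ha hb]
  have h0 : Sab a b x ⟨a + b - 2, by omega⟩
      = Tab a b (ext a b x) ⟨a + b - 2, by omega⟩
        / Tab a b (ext a b x) ⟨a + b - 1, by omega⟩ := rfl
  rw [h0, Tab_sec_eq ha hb x hx hU, Tab_top_W ha hb x hx hU]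

lemma Ufun_Sab : Ufun a b (Sab a b x) ≤ 1/4 := by
  have hs0 := s_nonneg ha hb x hx
  have hs4 := s_le_quarter ha hb x hx hU
  have hm := m_ge ha hb x hx hU
  have hm1 := m_le_one ha hb x hx hU
  have hb3 : (3:ℝ) ≤ (b:ℝ) := by exact_mod_cast hb
  have h1s : (0:ℝ) < 1 - sv a b x := by linarith
  have hmax : max (sv a b x) (1 - sv a b x) = 1 - sv a b x :=
    max_eq_right (by linarith)
  have hsum := sum_Sab ha hb x hx
  rw [hmax] at hsum
  have hml := mlast_Sab ha hb x hx hU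
  have hU' : (∑ i, x i) + 1 - 2 * mlast a b x ≤ 1/4 := hU
  show (∑ i, Sab a b x i) + 1 - 2 * mlast a b (Sab a b x) ≤ 1/4
  rw [hsum, hml]
  have heq : ((∑ i, x i) + 1 - ↑b * sv a b x) / (1 - sv a b x) - 1 + 1 -
      2 * ((mlast a b x - sv a b x) / (1 - sv a b x))
      = ((∑ i, x i) + 1 - ↑b * sv a b x - 2 * (mlast a b x - sv a b x)) / (1 - sv a b x) := by
    field_simp
    ring
  rw [heq, div_le_iff₀ h1s]
  nlinarith

end dyn3
end NE
end dynamics2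
section final

open ENNReal

namespace NE
variable {a b : ℕ}

/-- the invariant function: limsup of coordinate sums along the orbit. -/
noncomputable def phi (a b : ℕ) (x : Fin (a + b - 1) → ℝ) : ℝ≥0∞ :=
  Filter.limsup (fun k => ENNReal.ofReal (∑ i, (Sab a b)^[k] x i)) Filter.atTop

lemma phi_Sab (x : Fin (a + b - 1) → ℝ) : phi a b (Sab a b x) = phi a b x := by
  have h : (fun k => ENNReal.ofReal (∑ i, (Sab a b)^[k] (Sab a b x) i))
      = fun k => ENNReal.ofReal (∑ i, (Sab a b)^[k + 1] x i) := by
    funext k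
    rw [Function.iterate_succ_apply]
  rw [phi, h]
  exact Filter.limsup_nat_add (fun k => ENNReal.ofReal (∑ i, (Sab a b)^[k] x i)) 1

lemma measurable_Sab : Measurable (Sab a b) := by
  have hext : Measurable (ext a b) := by
    apply measurable_pi_lambda
    intro j
    by_cases h : (j : ℕ) < a + b - 1
    · have heq : (fun x : Fin (a + b - 1) → ℝ => ext a b x j) = fun x => x ⟨j, h⟩ := by
        funext x
        exact dif_pos h
      rw [heq]
      exact measurable_pi_apply _
    · have heq : (fun x : Fin (a + b - 1) → ℝ => ext a b x j) = fun _ => 1 := by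
        funext x
        exact dif_neg h
      rw [heq]
      exact measurable_const
  have hsubVec : Measurable (fun y : Fin (a + b) → ℝ => subVec a b y) := by
    apply measurable_pi_lambda
    intro j
    by_cases h : (j : ℕ) < a
    · have heq : (fun y : Fin (a + b) → ℝ => subVec a b y j) = fun y => y j := by
        funext y
        exact if_pos h
      rw [heq]
      exact measurable_pi_apply _
    · have heq : (fun y : Fin (a + b) → ℝ => subVec a b y j)
          = fun y => y j - y ⟨a - 1, by have := j.isLt; omega⟩ := by
        funext y
        exact if_neg h
      rw [heq]
      exact (measurable_pi_apply _).sub (measurable_pi_apply _)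
  have hTab : ∀ i : Fin (a + b), Measurable (fun y : Fin (a + b) → ℝ => Tab a b y i) := by
    intro i
    have heq : (fun y : Fin (a + b) → ℝ => Tab a b y i)
        = (fun v : Fin (a + b) → ℝ => (v ∘ Tuple.sort v) i)
          ∘ (fun y : Fin (a + b) → ℝ => subVec a b y) := rfl
    rw [heq]
    exact (measurable_sorted i).comp hsubVec
  apply measurable_pi_lambda
  intro i
  have heq : (fun x => Sab a b x i)
      = fun x => Tab a b (ext a b x) ⟨i, by have := i.isLt; omega⟩
        / Tab a b (ext a b x) ⟨a + b - 1, by have := i.isLt; omega⟩ := rfl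
  rw [heq]
  exact ((hTab _).comp hext).div ((hTab _).comp hext)

lemma measurable_phi : Measurable (phi a b) := by
  have h : ∀ k : ℕ, Measurable (fun x => ENNReal.ofReal (∑ i, (Sab a b)^[k] x i)) := by
    intro k
    apply ENNReal.measurable_ofReal.comp
    exact Finset.measurable_sum _
      (fun i _ => (measurable_pi_apply i).comp (measurable_Sab.iterate k))
  have heq : phi a b = fun x => ⨅ n : ℕ, ⨆ k, ⨆ (_ : k ≥ n),
      ENNReal.ofReal (∑ i, (Sab a b)^[k] x i) := by
    funext x
    rw [phi, Filter.limsup_eq_iInf_iSup_of_nat]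
  rw [heq]
  exact Measurable.iInf fun n => Measurable.iSup fun k => Measurable.iSup fun _ => h k

lemma measurableSet_BSet (n : ℕ) : MeasurableSet (BSet n) := by
  have h1 : BSet n = (⋂ i, {x : Fin n → ℝ | 0 ≤ x i})
      ∩ ((⋂ (i) (j) (_ : i ≤ j), {x : Fin n → ℝ | x i ≤ x j})
        ∩ ⋂ i, {x : Fin n → ℝ | x i ≤ 1}) := by
    ext x
    simp only [BSet, Set.mem_setOf_eq, Set.mem_inter_iff, Set.mem_iInter]
    constructor
    · rintro ⟨h1, h2, h3⟩
      exact ⟨h1, fun i j hij => h2 hij, h3⟩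
    · rintro ⟨h1, h2, h3⟩
      exact ⟨h1, fun i j hij => h2 i j hij, h3⟩
  rw [h1]
  refine (MeasurableSet.iInter fun i => ?_).inter
    ((MeasurableSet.iInter fun i => MeasurableSet.iInter fun j =>
      MeasurableSet.iInter fun _ => ?_).inter (MeasurableSet.iInter fun i => ?_))
  · exact measurableSet_le measurable_const (measurable_pi_apply i)
  · exact measurableSet_le (measurable_pi_apply i) (measurable_pi_apply j)
  · exact measurableSet_le (measurable_pi_apply i) measurable_const

section withhyp
variable (ha : 1 ≤ a) (hb : 3 ≤ b)
include ha hb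

lemma phi_le {x : Fin (a + b - 1) → ℝ} (hx : x ∈ BSet (a + b - 1))
    (hsum : ∑ i, x i ≤ 1/3) : phi a b x ≤ ENNReal.ofReal (1/3) := by
  have hb3 : (3:ℝ) ≤ (b:ℝ) := by exact_mod_cast hb
  have key : ∀ k, (Sab a b)^[k] x ∈ BSet (a + b - 1)
      ∧ (∑ i, (Sab a b)^[k] x i) ≤ 1/3 := by
    intro k
    induction k with
    | zero => exact ⟨hx, hsum⟩
    | succ k ih =>
      refine ⟨?_, ?_⟩
      · rw [Function.iterate_succ_apply']
        exact Sab_mem_BSet ha hb _ ih.1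
      · rw [Function.iterate_succ_apply']
        have hle := sum_Sab_le ha hb _ ih.1 (by linarith [ih.2])
        linarith [ih.2]
  apply Filter.limsup_le_of_le (by isBoundedDefault)
  filter_upwards with k
  exact ENNReal.ofReal_le_ofReal (key k).2

lemma phi_ge {x : Fin (a + b - 1) → ℝ} (hx : x ∈ BSet (a + b - 1))
    (hU : Ufun a b x ≤ 1/4) : ENNReal.ofReal (3/4) ≤ phi a b x := by
  have key : ∀ k, (Sab a b)^[k] x ∈ BSet (a + b - 1)
      ∧ Ufun a b ((Sab a b)^[k] x) ≤ 1/4 := by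
    intro k
    induction k with
    | zero => exact ⟨hx, hU⟩
    | succ k ih =>
      refine ⟨?_, ?_⟩
      · rw [Function.iterate_succ_apply']
        exact Sab_mem_BSet ha hb _ ih.1
      · rw [Function.iterate_succ_apply']
        exact Ufun_Sab ha hb _ ih.1 ih.2
  rw [phi, Filter.limsup_eq_iInf_iSup_of_nat]
  refine le_iInf fun n => ?_
  refine le_iSup₂_of_le n le_rfl ?_
  exact ENNReal.ofReal_le_ofReal (Wsum ha hb _ (key n).1 (key n).2)

end withhyp
end NE
end final
section thm

open ENNReal

lemma box_pos (N : ℕ) (lo hi : Fin N → ℝ) (h : ∀ i, lo i < hi i) :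
    0 < volume {x : Fin N → ℝ | ∀ i, lo i < x i ∧ x i < hi i} := by
  have hopen : IsOpen {x : Fin N → ℝ | ∀ i, lo i < x i ∧ x i < hi i} := by
    have heq : {x : Fin N → ℝ | ∀ i, lo i < x i ∧ x i < hi i}
        = ⋂ i, (fun x : Fin N → ℝ => x i) ⁻¹' Set.Ioo (lo i) (hi i) := by
      ext x
      simp [Set.mem_iInter, Set.mem_Ioo]
    rw [heq]
    exact isOpen_iInter_of_finite fun i => isOpen_Ioo.preimage (continuous_apply i)
  have hne : Set.Nonempty {x : Fin N → ℝ | ∀ i, lo i < x i ∧ x i < hi i} :=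
    ⟨fun i => (lo i + hi i)/2, fun i => ⟨by linarith [h i], by linarith [h i]⟩⟩
  exact hopen.measure_pos volume hne

set_option maxHeartbeats 1000000 in
/-- for `a ≥ 1`, `b ≥ 3`, the map `S_{a,b}` is not ergodic with
respect to Lebesgue measure on `B`. -/
theorem statement4 (a b : ℕ) (ha : 1 ≤ a) (hb : 3 ≤ b) :
    ∃ E : Set (Fin (a + b - 1) → ℝ), MeasurableSet E ∧ E ⊆ BSet (a + b - 1) ∧
      volume (symmDiff (BSet (a + b - 1) ∩ Sab a b ⁻¹' E) E) = 0 ∧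
      0 < volume E ∧ 0 < volume (BSet (a + b - 1) \ E) := by
  classical
  set E : Set (Fin (a + b - 1) → ℝ) :=
    BSet (a + b - 1) ∩ (NE.phi a b ⁻¹' Set.Iio (ENNReal.ofReal (1/2))) with hE
  have hEmeas : MeasurableSet E :=
    (NE.measurableSet_BSet _).inter (NE.measurable_phi measurableSet_Iio)
  have hEsub : E ⊆ BSet (a + b - 1) := Set.inter_subset_left
  have hinv : BSet (a + b - 1) ∩ Sab a b ⁻¹' E = E := by
    ext x
    simp only [hE, Set.mem_inter_iff, Set.mem_preimage, Set.mem_Iio]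
    constructor
    · rintro ⟨hB, _, hphi⟩
      exact ⟨hB, by rwa [NE.phi_Sab] at hphi⟩
    · rintro ⟨hB, hphi⟩
      exact ⟨hB, NE.Sab_mem_BSet ha hb x hB, by rwa [NE.phi_Sab]⟩
  have hNnat : 3 ≤ a + b - 1 := by omega
  have hN : (1:ℝ) ≤ (a + b - 1 : ℕ) := by exact_mod_cast (by omega : 1 ≤ a + b - 1)
  set Nr : ℝ := ((a + b - 1 : ℕ) : ℝ) with hNr
  have hNrpos : 0 < Nr := by linarith
  have hNr0 : Nr ≠ 0 := ne_of_gt hNrpos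
  refine ⟨E, hEmeas, hEsub, ?_, ?_, ?_⟩
  · rw [hinv, symmDiff_self]
    simp
  · -- E has positive measure
    set ε : ℝ := 1/(3 * Nr * Nr) with hε
    have hεpos : 0 < ε := by positivity
    have hsub : {x : Fin (a + b - 1) → ℝ |
        ∀ i : Fin (a + b - 1), ((i:ℕ):ℝ) * ε < x i ∧ x i < (((i:ℕ):ℝ) + 1) * ε} ⊆ E := by
      intro x hxO
      have hub : ∀ i : Fin (a + b - 1), x i ≤ Nr * ε := by
        intro i
        have h1 := (hxO i).2
        have h2 : ((i:ℕ):ℝ) + 1 ≤ Nr := by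
          rw [hNr]
          exact_mod_cast i.isLt
        have h0 : (0:ℝ) ≤ ((i:ℕ):ℝ) := Nat.cast_nonneg _
        nlinarith [hεpos]
      have hxB : x ∈ BSet (a + b - 1) := by
        refine ⟨fun i => ?_, fun i j hij => ?_, fun i => ?_⟩
        · have h1 := (hxO i).1
          have h2 : (0:ℝ) ≤ ((i:ℕ):ℝ) := Nat.cast_nonneg _
          nlinarith [hεpos]
        · rcases eq_or_lt_of_le hij with heq | hlt
          · rw [heq]
          · have h1 := (hxO i).2
            have h2 := (hxO j).1
            have h3 : ((i:ℕ):ℝ) + 1 ≤ ((j:ℕ):ℝ) := by exact_mod_cast hlt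
            nlinarith [hεpos]
        · have h1 := hub i
          have h2 : Nr * ε = 1/(3*Nr) := by
            rw [hε]
            field_simp
          have h3 : 1/(3*Nr) ≤ 1 := by
            rw [div_le_one (by positivity)]
            linarith
          linarith
      have hsum : ∑ i, x i ≤ 1/3 := by
        have h1 : ∑ i, x i ≤ ∑ _i : Fin (a + b - 1), Nr * ε :=
          Finset.sum_le_sum fun i _ => hub i
        have h2 : ∑ _i : Fin (a + b - 1), Nr * ε = Nr * (Nr * ε) := by
          rw [Finset.sum_const, Finset.card_univ, Fintype.card_fin, nsmul_eq_mul, hNr]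
        have h3 : Nr * (Nr * ε) = 1/3 := by
          rw [hε]
          field_simp
        linarith
      refine ⟨hxB, ?_⟩
      have hle := NE.phi_le ha hb hxB hsum
      have hlt : ENNReal.ofReal (1/3) < ENNReal.ofReal (1/2) := by
        rw [ENNReal.ofReal_lt_ofReal_iff (by norm_num)]
        norm_num
      exact lt_of_le_of_lt hle hlt
    refine lt_of_lt_of_le ?_ (measure_mono hsub)
    apply box_pos
    intro i
    have h0 : (0:ℝ) ≤ ((i:ℕ):ℝ) := Nat.cast_nonneg _
    nlinarith [hεpos]
  · -- the complement has positive measure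
    set δ : ℝ := 1/(8 * Nr * Nr) with hδ
    have hδpos : 0 < δ := by positivity
    set lo : Fin (a + b - 1) → ℝ :=
      fun i => if (i:ℕ) = a + b - 2 then 7/8 else ((i:ℕ):ℝ) * δ with hlo
    set hi : Fin (a + b - 1) → ℝ :=
      fun i => if (i:ℕ) = a + b - 2 then 1 else (((i:ℕ):ℝ) + 1) * δ with hhi
    have hNδ : Nr * (Nr * δ) = 1/8 := by
      rw [hδ]
      field_simp
    have hNδ1 : Nr * δ ≤ 1/8 := by nlinarith
    have hub : ∀ (x : Fin (a + b - 1) → ℝ),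
        (∀ i, lo i < x i ∧ x i < hi i) →
        ∀ i : Fin (a + b - 1), (i:ℕ) ≠ a + b - 2 → x i ≤ Nr * δ := by
      intro x hxO i hi2
      have h1 := (hxO i).2
      rw [hhi] at h1
      simp only [hi2, if_false] at h1
      have h2 : ((i:ℕ):ℝ) + 1 ≤ Nr := by
        rw [hNr]
        exact_mod_cast i.isLt
      have h0 : (0:ℝ) ≤ ((i:ℕ):ℝ) := Nat.cast_nonneg _
      nlinarith [hδpos]
    have hsub : {x : Fin (a + b - 1) → ℝ | ∀ i, lo i < x i ∧ x i < hi i}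
        ⊆ BSet (a + b - 1) \ E := by
      intro x hxO
      have hlast : 7/8 < x ⟨a + b - 2, by omega⟩ ∧ x ⟨a + b - 2, by omega⟩ < 1 := by
        have h1 := hxO ⟨a + b - 2, by omega⟩
        rw [hlo, hhi] at h1
        simpa using h1
      have hxB : x ∈ BSet (a + b - 1) := by
        refine ⟨fun i => ?_, fun i j hij => ?_, fun i => ?_⟩
        · have h1 := (hxO i).1
          rw [hlo] at h1
          rcases eq_or_ne (i:ℕ) (a + b - 2) with h | h
          · simp only [h, if_true] at h1
            linarith
          · simp only [h, if_false] at h1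
            have h2 : (0:ℝ) ≤ ((i:ℕ):ℝ) := Nat.cast_nonneg _
            nlinarith
        · rcases eq_or_lt_of_le hij with heq | hlt
          · rw [heq]
          · have hjle : (j:ℕ) ≤ a + b - 2 := by have := j.isLt; omega
            have hine : (i:ℕ) ≠ a + b - 2 := by
              have : (i:ℕ) < (j:ℕ) := hlt
              omega
            have hxi := hub x hxO i hine
            rcases eq_or_ne (j:ℕ) (a + b - 2) with h | h
            · have h2 := (hxO j).1
              rw [hlo] at h2
              simp only [h, if_true] at h2
              linarith
            · have h2 := (hxO j).1
              rw [hlo] at h2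
              simp only [h, if_false] at h2
              have h1 := (hxO i).2
              rw [hhi] at h1
              simp only [hine, if_false] at h1
              have h3 : ((i:ℕ):ℝ) + 1 ≤ ((j:ℕ):ℝ) := by exact_mod_cast hlt
              nlinarith
        · rcases eq_or_ne (i:ℕ) (a + b - 2) with h | h
          · have h1 := (hxO i).2
            rw [hhi] at h1
            simp only [h, if_true] at h1
            linarith
          · have h1 := hub x hxO i h
            linarith
      have hUx : NE.Ufun a b x ≤ 1/4 := by
        have hm : NE.mlast a b x = x ⟨a + b - 2, by omega⟩ := NE.mlast_eq ha hb x
        have hsplit : ∑ i ∈ Finset.univ.erase ⟨a + b - 2, by omega⟩, x i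
            + x ⟨a + b - 2, by omega⟩ = ∑ i, x i :=
          Finset.sum_erase_add _ _ (Finset.mem_univ _)
        have hcard : (Finset.univ.erase
            (⟨a + b - 2, by omega⟩ : Fin (a + b - 1))).card = a + b - 2 := by
          rw [Finset.card_erase_of_mem (Finset.mem_univ _), Finset.card_univ,
            Fintype.card_fin]
          omega
        have hsmall : ∑ i ∈ Finset.univ.erase
            (⟨a + b - 2, by omega⟩ : Fin (a + b - 1)), x i ≤ 1/8 := by
          have h1 : ∀ i ∈ Finset.univ.erase
              (⟨a + b - 2, by omega⟩ : Fin (a + b - 1)), x i ≤ Nr * δ := by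
            intro i hi3
            apply hub x hxO
            intro hcontra
            have : i = (⟨a + b - 2, by omega⟩ : Fin (a + b - 1)) := Fin.ext hcontra
            rw [this] at hi3
            exact (Finset.notMem_erase _ _) hi3
          calc ∑ i ∈ Finset.univ.erase (⟨a + b - 2, by omega⟩ : Fin (a + b - 1)), x i
              ≤ ∑ _i ∈ Finset.univ.erase
                (⟨a + b - 2, by omega⟩ : Fin (a + b - 1)), Nr * δ :=
              Finset.sum_le_sum h1
            _ = ((a + b - 2 : ℕ) : ℝ) * (Nr * δ) := by
              rw [Finset.sum_const, hcard, nsmul_eq_mul]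
            _ ≤ Nr * (Nr * δ) := by
              have : ((a + b - 2 : ℕ) : ℝ) ≤ Nr := by
                rw [hNr]
                exact_mod_cast (by omega : a + b - 2 ≤ a + b - 1)
              nlinarith
            _ = 1/8 := hNδ
        show (∑ i, x i) + 1 - 2 * NE.mlast a b x ≤ 1/4
        rw [hm]
        have := hlast.1
        linarith [hsplit, hsmall]
      have hge := NE.phi_ge ha hb hxB hUx
      refine ⟨hxB, ?_⟩
      intro hmem
      have hlt : NE.phi a b x < ENNReal.ofReal (1/2) := hmem.2
      have hge2 : ENNReal.ofReal (1/2) ≤ NE.phi a b x :=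
        le_trans (ENNReal.ofReal_le_ofReal (by norm_num)) hge
      exact absurd hlt (not_lt.mpr hge2)
    refine lt_of_lt_of_le ?_ (measure_mono hsub)
    apply box_pos
    intro i
    rw [hlo, hhi]
    rcases eq_or_ne (i:ℕ) (a + b - 2) with h | h
    · simp only [h, if_true]
      norm_num
    · simp only [h, if_false]
      have h0 : (0:ℝ) ≤ ((i:ℕ):ℝ) := Nat.cast_nonneg _
      nlinarith [hδpos]

end thm
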